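/- Let T be a finite tree and let v₁v₂…v_t (t ≥ 4) be a path in T with deg(v₁) < deg(v_t) and deg(v₂) > deg(v_{t−1}). Let T′ be the graph obtained from T by deleting the edges v₁v₂ and v_{t−1}v_t and adding the edges v₁v_{t−1} and v₂v_t. Then T′ is a tree, every vertex has the same degree in T′ as in T, and SO(T′) < SO(T). -/

import Mathlib

open SimpleGraph

/-- Degree of a vertex. -/
noncomputable def deg {V : Type*} (G : SimpleGraph V) (v : V) : ℕ :=
  Nat.card (G.neighborSet v)

/-- Sombor index. -/
noncomputable def somborIndex {V : Type*} (G : SimpleGraph V) : ℝ :=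
  ∑ᶠ e ∈ G.edgeSet,
    Sym2.lift ⟨fun u v => Real.sqrt ((deg G u : ℝ) ^ 2 + (deg G v : ℝ) ^ 2),
      fun u v => by simp [add_comm]⟩ e

/-- Multiset of degrees of non-pendant vertices. -/
noncomputable def degSeq {V : Type*} [Fintype V] (G : SimpleGraph V) : Multiset ℕ :=
  ((Finset.univ : Finset V).filter (fun v => deg G v ≠ 1)).val.map (deg G)

def pathCondition {V : Type*} (G : SimpleGraph V) : Prop :=
  ∀ ⦃u v : V⦄ (p : G.Walk u v), p.IsPath → 3 ≤ p.length →
    deg G u < deg G v → deg G (p.getVert 1) ≤ deg G (p.getVert (p.length - 1))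

def attachPendants {V : Type*} (G : SimpleGraph V) (v : V) (k : ℕ) :
    SimpleGraph (V ⊕ Fin k) where
  Adj x y :=
    match x, y with
    | Sum.inl a, Sum.inl b => G.Adj a b
    | Sum.inl a, Sum.inr _ => a = v
    | Sum.inr _, Sum.inl b => b = v
    | Sum.inr _, Sum.inr _ => False
  symm := by
    constructor
    rintro (a | i) (b | j) h
    · exact h.symm
    · exact h
    · exact h
    · exact h.elim
  loopless := by
    constructor
    rintro (a | i) h
    · exact G.irrefl h
    · exact h

private lemma ne_of_isPath_not_nil {V : Type*} {G : SimpleGraph V} {u v : V}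
    {p : G.Walk u v} (hp : p.IsPath) (hnil : ¬p.Nil) : u ≠ v := by
  have h1 : u :: p.tail.support = p.support := p.cons_support_tail hnil
  have h2 := hp.support_nodup
  rw [← h1, List.nodup_cons] at h2
  intro h
  subst h
  exact h2.1 p.tail.end_mem_support

private lemma acyclic_mono' {V : Type*} {G H : SimpleGraph V} (hle : H ≤ G)
    (hG : G.IsAcyclic) : H.IsAcyclic := fun _ c hc =>
  hG (c.transfer G fun _ he => edgeSet_mono hle (c.edges_subset_edgeSet he)) (hc.transfer _)

private lemma acyclic_add_edge {V : Type*} {G : SimpleGraph V} (hG : G.IsAcyclic)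
    {a b : V} (hab : ¬G.Reachable a b) :
    (G ⊔ SimpleGraph.fromEdgeSet {s(a, b)}).IsAcyclic := by
  intro x c hc
  by_cases he : s(a, b) ∈ c.edges
  · have hr := (SimpleGraph.adj_and_reachable_delete_edges_iff_exists_cycle.mpr ⟨x, c, hc, he⟩).2
    refine hab (hr.mono ?_)
    intro x y hxy
    rw [deleteEdges_adj, sup_adj] at hxy
    rcases hxy with ⟨h1 | h2, hn⟩
    · exact h1
    · exact absurd ((fromEdgeSet_adj _).mp h2).1 hn
  · refine hG (c.transfer G fun e hce => ?_) (hc.transfer _)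
    have h := c.edges_subset_edgeSet hce
    rw [edgeSet_sup, edgeSet_fromEdgeSet] at h
    rcases h with h | ⟨h, _⟩
    · exact h
    · rw [Set.mem_singleton_iff.mp h] at hce; exact absurd hce he

private lemma not_reachable_delete_edge {V : Type*} {G : SimpleGraph V} (hG : G.IsAcyclic)
    {x y : V} {q : G.Walk x y} (hq : q.IsPath) {e : Sym2 V} (he : e ∈ q.edges) :
    ¬(G.deleteEdges {e}).Reachable x y := by
  classical
  rintro ⟨w⟩
  obtain ⟨w', hw'⟩ := w.toPath
  have hsub : ∀ f ∈ w'.edges, f ∈ G.edgeSet := fun f hf => by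
    have h := w'.edges_subset_edgeSet hf
    rw [edgeSet_deleteEdges] at h
    exact h.1
  have hEq : (⟨w'.transfer G hsub, hw'.transfer hsub⟩ : G.Path x y) = ⟨q, hq⟩ :=
    hG.path_unique _ _
  have he' : e ∈ (w'.transfer G hsub).edges := by
    have hEq' : w'.transfer G hsub = q := congrArg Subtype.val hEq
    rw [hEq']; exact he
  rw [SimpleGraph.Walk.edges_transfer] at he'
  have h2 := w'.edges_subset_edgeSet he'
  rw [edgeSet_deleteEdges] at h2
  exact h2.2 rfl

private lemma card_swap {V : Type*} [Fintype V] {s : Set V} {x y : V} (hx : x ∈ s) (hy : y ∉ s) :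
    Nat.card (insert y (s \ {x}) : Set V) = Nat.card s := by
  rw [Nat.card_coe_set_eq, Nat.card_coe_set_eq]
  rw [Set.ncard_insert_of_notMem (fun h => hy h.1) (Set.toFinite _),
    Set.ncard_diff_singleton_of_mem hx]
  have h1 : 0 < s.ncard := (Set.ncard_pos (Set.toFinite _)).mpr ⟨x, hx⟩
  omega

private lemma sqrt_swap_ineq {A B C D : ℝ} (hA : 0 ≤ A) (hC : 0 ≤ C) (hAD : A < D)
    (hCB : C < B) :
    Real.sqrt (A ^ 2 + C ^ 2) + Real.sqrt (B ^ 2 + D ^ 2) <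
      Real.sqrt (A ^ 2 + B ^ 2) + Real.sqrt (C ^ 2 + D ^ 2) := by
  have hB : 0 ≤ B := hC.trans hCB.le
  have hD : 0 ≤ D := hA.trans hAD.le
  have h1 : Real.sqrt (A ^ 2 + B ^ 2) ^ 2 = A ^ 2 + B ^ 2 := Real.sq_sqrt (by positivity)
  have h2 : Real.sqrt (A ^ 2 + C ^ 2) ^ 2 = A ^ 2 + C ^ 2 := Real.sq_sqrt (by positivity)
  have h3 : Real.sqrt (B ^ 2 + D ^ 2) ^ 2 = B ^ 2 + D ^ 2 := Real.sq_sqrt (by positivity)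
  have h4 : Real.sqrt (C ^ 2 + D ^ 2) ^ 2 = C ^ 2 + D ^ 2 := Real.sq_sqrt (by positivity)
  have hs1 := Real.sqrt_nonneg (A ^ 2 + B ^ 2)
  have hs2 := Real.sqrt_nonneg (A ^ 2 + C ^ 2)
  have hs3 := Real.sqrt_nonneg (B ^ 2 + D ^ 2)
  have hs4 := Real.sqrt_nonneg (C ^ 2 + D ^ 2)
  have hBC : C ^ 2 < B ^ 2 := by nlinarith
  have hAD2 : A ^ 2 < D ^ 2 := by nlinarith
  have hmul : Real.sqrt (A ^ 2 + C ^ 2) * Real.sqrt (B ^ 2 + D ^ 2) <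
      Real.sqrt (A ^ 2 + B ^ 2) * Real.sqrt (C ^ 2 + D ^ 2) := by
    have hsq : (Real.sqrt (A ^ 2 + C ^ 2) * Real.sqrt (B ^ 2 + D ^ 2)) ^ 2 <
        (Real.sqrt (A ^ 2 + B ^ 2) * Real.sqrt (C ^ 2 + D ^ 2)) ^ 2 := by
      rw [mul_pow, mul_pow, h1, h2, h3, h4]
      nlinarith [mul_pos (sub_pos.2 hBC) (sub_pos.2 hAD2)]
    exact lt_of_pow_lt_pow_left₀ 2 (by positivity) hsq
  have hfin : (Real.sqrt (A ^ 2 + C ^ 2) + Real.sqrt (B ^ 2 + D ^ 2)) ^ 2 <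
      (Real.sqrt (A ^ 2 + B ^ 2) + Real.sqrt (C ^ 2 + D ^ 2)) ^ 2 := by
    have hsum : Real.sqrt (A ^ 2 + B ^ 2) ^ 2 + Real.sqrt (C ^ 2 + D ^ 2) ^ 2 =
        Real.sqrt (A ^ 2 + C ^ 2) ^ 2 + Real.sqrt (B ^ 2 + D ^ 2) ^ 2 := by
      rw [h1, h2, h3, h4]; ring
    nlinarith [hmul, hsum]
  exact lt_of_pow_lt_pow_left₀ 2 (by positivity) hfin

set_option maxHeartbeats 1600000 in
/-- Swapping the end edges of a path `v₁v₂…v_t` (`t ≥ 4`) with `deg v₁ < deg v_t` and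
`deg v₂ > deg v_{t−1}` yields a tree with the same degrees and strictly smaller Sombor index. -/
theorem sombor_edge_swap {V : Type*} [Fintype V] (T : SimpleGraph V) (hT : T.IsTree)
    (u v : V) (p : T.Walk u v) (hp : p.IsPath) (hlen : 3 ≤ p.length)
    (h1 : deg T u < deg T v)
    (h2 : deg T (p.getVert (p.length - 1)) < deg T (p.getVert 1))
    (T' : SimpleGraph V)
    (hT' : T' =
      (T.deleteEdges {s(u, p.getVert 1), s(p.getVert (p.length - 1), v)}) ⊔
        SimpleGraph.fromEdgeSet {s(u, p.getVert (p.length - 1)), s(p.getVert 1, v)}) :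
    T'.IsTree ∧ (∀ w : V, deg T' w = deg T w) ∧ somborIndex T' < somborIndex T := by
  classical
  obtain ⟨b, hb⟩ : ∃ x, x = p.getVert 1 := ⟨_, rfl⟩
  obtain ⟨c, hc⟩ : ∃ x, x = p.getVert (p.length - 1) := ⟨_, rfl⟩
  rw [← hb, ← hc] at h2 hT'
  obtain ⟨e1, he1def⟩ : ∃ x, x = s(u, b) := ⟨_, rfl⟩
  obtain ⟨e2, he2def⟩ : ∃ x, x = s(c, v) := ⟨_, rfl⟩
  obtain ⟨f1, hf1def⟩ : ∃ x, x = s(u, c) := ⟨_, rfl⟩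
  obtain ⟨f2, hf2def⟩ : ∃ x, x = s(b, v) := ⟨_, rfl⟩
  rw [← he1def, ← he2def, ← hf1def, ← hf2def] at hT'
  -- basic walk facts
  have hnnil : ¬p.Nil := by rw [SimpleGraph.Walk.not_nil_iff_lt_length]; omega
  have hub : T.Adj u b := by rw [hb]; exact p.adj_snd hnnil
  have hcv : T.Adj c v := by
    have h := p.adj_getVert_succ (i := p.length - 1) (by omega)
    rw [show p.length - 1 + 1 = p.length by omega, p.getVert_length] at h
    rw [hc]
    exact h
  have htlen : p.tail.length + 1 = p.length := SimpleGraph.Walk.length_tail_add_one hnnil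
  have htnnil : ¬p.tail.Nil := by rw [SimpleGraph.Walk.not_nil_iff_lt_length]; omega
  have htpath : p.tail.IsPath := hp.tail
  have huv : u ≠ v := ne_of_isPath_not_nil hp hnnil
  have hbv : b ≠ v := by rw [hb]; exact ne_of_isPath_not_nil htpath htnnil
  have hbc : b ≠ c := by intro h; rw [h] at h2; exact lt_irrefl _ h2
  have hub' : u ≠ b := hub.ne
  have hcv' : c ≠ v := hcv.ne
  have hcmem_tail : c ∈ p.tail.support := by
    rw [SimpleGraph.Walk.mem_support_iff_exists_getVert]
    refine ⟨p.length - 2, ?_, by omega⟩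
    rw [SimpleGraph.Walk.getVert_tail _, hc]
    congr 1
    omega
  have huc : u ≠ c := by
    intro h
    have hnd := hp.support_nodup
    rw [← p.cons_support_tail hnnil, List.nodup_cons] at hnd
    exact hnd.1 (h ▸ hcmem_tail)
  -- non-adjacency of u,c and b,v
  have hnadj_uc : ¬T.Adj u c := by
    intro hadj
    have hw : (SimpleGraph.Walk.cons hadj (SimpleGraph.Walk.cons hcv SimpleGraph.Walk.nil)).IsPath := by
      simp [SimpleGraph.Walk.isPath_def, huc, huv, hcv']
    have heq := hT.IsAcyclic.path_unique ⟨_, hw⟩ ⟨p, hp⟩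
    have hlen2 := congrArg (fun q : T.Path u v => q.1.length) heq
    simp only [SimpleGraph.Walk.length_cons, SimpleGraph.Walk.length_nil] at hlen2
    omega
  have hnadj_bv : ¬T.Adj b v := by
    intro hadj
    have hw : (SimpleGraph.Walk.cons hub (SimpleGraph.Walk.cons hadj SimpleGraph.Walk.nil)).IsPath := by
      simp [SimpleGraph.Walk.isPath_def, hub', huv, hbv]
    have heq := hT.IsAcyclic.path_unique ⟨_, hw⟩ ⟨p, hp⟩
    have hlen2 := congrArg (fun q : T.Path u v => q.1.length) heq
    simp only [SimpleGraph.Walk.length_cons, SimpleGraph.Walk.length_nil] at hlen2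
    omega
  -- edge facts
  have he1E : e1 ∈ T.edgeSet := by rw [he1def]; exact hub
  have he2E : e2 ∈ T.edgeSet := by rw [he2def]; exact hcv
  have hf1E : f1 ∉ T.edgeSet := by rw [hf1def]; exact hnadj_uc
  have hf2E : f2 ∉ T.edgeSet := by rw [hf2def]; exact hnadj_bv
  have he12 : e1 ≠ e2 := by
    rw [he1def, he2def]
    intro h
    rcases Sym2.eq_iff.mp h with ⟨h', _⟩ | ⟨h', _⟩
    · exact huc h'
    · exact huv h'
  have hf12 : f1 ≠ f2 := by
    rw [hf1def, hf2def]
    intro h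
    rcases Sym2.eq_iff.mp h with ⟨h', _⟩ | ⟨h', _⟩
    · exact hub' h'
    · exact huv h'
  have hf1e2 : f1 ≠ e2 := fun h => hf1E (h ▸ he2E)
  -- adjacency characterization of T'
  have hadj' : ∀ x y : V, T'.Adj x y ↔
      (T.Adj x y ∧ s(x, y) ≠ e1 ∧ s(x, y) ≠ e2) ∨ s(x, y) = f1 ∨ s(x, y) = f2 := by
    intro x y
    rw [hT']
    simp only [sup_adj, deleteEdges_adj, fromEdgeSet_adj, Set.mem_insert_iff,
      Set.mem_singleton_iff]
    constructor
    · rintro (⟨h, hne⟩ | ⟨h | h, _⟩)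
      · exact Or.inl ⟨h, fun h1 => hne (Or.inl h1), fun h2 => hne (Or.inr h2)⟩
      · exact Or.inr (Or.inl h)
      · exact Or.inr (Or.inr h)
    · rintro (⟨h, hx1, hx2⟩ | h | h)
      · exact Or.inl ⟨h, fun hx => hx.elim hx1 hx2⟩
      · refine Or.inr ⟨Or.inl h, ?_⟩
        rw [hf1def] at h
        rcases Sym2.eq_iff.mp h with ⟨rfl, rfl⟩ | ⟨rfl, rfl⟩
        · exact huc
        · exact fun hh => huc hh.symm
      · refine Or.inr ⟨Or.inr h, ?_⟩
        rw [hf2def] at h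
        rcases Sym2.eq_iff.mp h with ⟨rfl, rfl⟩ | ⟨rfl, rfl⟩
        · exact hbv
        · exact fun hh => hbv hh.symm
  -- neighbor sets
  have hNu : T'.neighborSet u = insert c (T.neighborSet u \ {b}) := by
    ext x
    simp only [mem_neighborSet, hadj', he1def, he2def, hf1def, hf2def, ne_eq, Sym2.eq_iff,
      Set.mem_insert_iff, Set.mem_diff, Set.mem_singleton_iff]
    constructor
    · rintro (⟨h, hx1, hx2⟩ | h | h) <;> tauto
    · rintro (rfl | ⟨h, hne⟩) <;> tauto
  have hNb : T'.neighborSet b = insert v (T.neighborSet b \ {u}) := by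
    ext x
    simp only [mem_neighborSet, hadj', he1def, he2def, hf1def, hf2def, ne_eq, Sym2.eq_iff,
      Set.mem_insert_iff, Set.mem_diff, Set.mem_singleton_iff]
    constructor
    · rintro (⟨h, hx1, hx2⟩ | h | h) <;> tauto
    · rintro (rfl | ⟨h, hne⟩) <;> tauto
  have hNc : T'.neighborSet c = insert u (T.neighborSet c \ {v}) := by
    ext x
    simp only [mem_neighborSet, hadj', he1def, he2def, hf1def, hf2def, ne_eq, Sym2.eq_iff,
      Set.mem_insert_iff, Set.mem_diff, Set.mem_singleton_iff]
    constructor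
    · rintro (⟨h, hx1, hx2⟩ | h | h) <;> tauto
    · rintro (rfl | ⟨h, hne⟩) <;> tauto
  have hNv : T'.neighborSet v = insert b (T.neighborSet v \ {c}) := by
    ext x
    simp only [mem_neighborSet, hadj', he1def, he2def, hf1def, hf2def, ne_eq, Sym2.eq_iff,
      Set.mem_insert_iff, Set.mem_diff, Set.mem_singleton_iff]
    constructor
    · rintro (⟨h, hx1, hx2⟩ | h | h) <;> tauto
    · rintro (rfl | ⟨h, hne⟩) <;> tauto
  -- degrees
  have hdeg : ∀ w : V, deg T' w = deg T w := by
    intro w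
    by_cases hwu : w = u
    · subst hwu
      show Nat.card _ = Nat.card _
      rw [hNu]
      exact card_swap hub hnadj_uc
    by_cases hwb : w = b
    · subst hwb
      show Nat.card _ = Nat.card _
      rw [hNb]
      exact card_swap hub.symm hnadj_bv
    by_cases hwc : w = c
    · subst hwc
      show Nat.card _ = Nat.card _
      rw [hNc]
      exact card_swap hcv (fun h => hnadj_uc h.symm)
    by_cases hwv : w = v
    · subst hwv
      show Nat.card _ = Nat.card _
      rw [hNv]
      exact card_swap hcv.symm (fun h => hnadj_bv h.symm)
    · have hN : T'.neighborSet w = T.neighborSet w := by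
        ext x
        simp only [mem_neighborSet, hadj', he1def, he2def, hf1def, hf2def, ne_eq, Sym2.eq_iff]
        constructor
        · rintro (⟨h, hx1, hx2⟩ | h | h) <;> tauto
        · intro h
          refine Or.inl ⟨h, ?_, ?_⟩ <;> tauto
      show Nat.card _ = Nat.card _
      rw [hN]
  -- edge set of T'
  have hE' : T'.edgeSet = (T.edgeSet \ {e1, e2}) ∪ {f1, f2} := by
    rw [hT', edgeSet_sup, edgeSet_deleteEdges, edgeSet_fromEdgeSet]
    congr 1
    ext e
    simp only [Set.mem_diff, Set.mem_insert_iff, Set.mem_singleton_iff, Set.mem_setOf_eq]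
    constructor
    · rintro ⟨h, _⟩; exact h
    · rintro (rfl | rfl)
      · refine ⟨Or.inl rfl, ?_⟩
        rw [hf1def]
        simpa [Sym2.mk_isDiag_iff] using huc
      · refine ⟨Or.inr rfl, ?_⟩
        rw [hf2def]
        simpa [Sym2.mk_isDiag_iff] using hbv
  -- T' adjacency of new edges
  have hT'uc : T'.Adj u c := (hadj' u c).mpr (Or.inr (Or.inl hf1def.symm))
  have hT'bv : T'.Adj b v := (hadj' b v).mpr (Or.inr (Or.inr hf2def.symm))
  -- e1 not in tail edges
  have hpedges : p.edges = e1 :: p.tail.edges := by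
    rw [he1def, hb]
    conv_lhs => rw [← p.cons_tail_eq hnnil]
    rfl
  have he1tail : e1 ∉ p.tail.edges := by
    have hnd := hp.isTrail.edges_nodup
    rw [hpedges, List.nodup_cons] at hnd
    exact hnd.1
  -- e2 in tail edges
  have he2tail : e2 ∈ p.tail.edges := by
    have hrnil : ¬p.tail.reverse.Nil := by
      rw [SimpleGraph.Walk.not_nil_iff_lt_length, SimpleGraph.Walk.length_reverse]; omega
    have hmem : s(v, p.tail.reverse.getVert 1) ∈ p.tail.reverse.edges := by
      have hce := congrArg SimpleGraph.Walk.edges (p.tail.reverse.cons_tail_eq hrnil)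
      rw [SimpleGraph.Walk.edges_cons] at hce
      rw [← hce]
      exact List.mem_cons_self
    have hgv : p.tail.reverse.getVert 1 = c := by
      rw [SimpleGraph.Walk.getVert_reverse, SimpleGraph.Walk.getVert_tail _, hc]
      congr 1
      omega
    rw [hgv, SimpleGraph.Walk.edges_reverse, List.mem_reverse] at hmem
    rw [he2def, Sym2.eq_swap]
    exact hmem
  -- middle walk from b to c inside T'
  have hw0sub : ∀ e ∈ (p.tail.takeUntil c hcmem_tail).edges, e ∈ T'.edgeSet := by
    intro e he
    have hetail : e ∈ p.tail.edges := p.tail.edges_takeUntil_subset hcmem_tail he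
    have heT : e ∈ T.edgeSet := (p.tail.takeUntil c hcmem_tail).edges_subset_edgeSet he
    have hne1 : e ≠ e1 := fun h => he1tail (h ▸ hetail)
    have hne2 : e ≠ e2 := by
      rintro rfl
      rw [he2def] at he
      have hvsup : v ∈ (p.tail.takeUntil c hcmem_tail).support :=
        SimpleGraph.Walk.snd_mem_support_of_mem_edges _ he
      have hspec := p.tail.take_spec hcmem_tail
      have hnd := htpath.support_nodup
      rw [← hspec, SimpleGraph.Walk.support_append] at hnd
      have hdisj := List.disjoint_of_nodup_append hnd
      have hv2 : v ∈ (p.tail.dropUntil c hcmem_tail).support.tail := by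
        have hend := (p.tail.dropUntil c hcmem_tail).end_mem_support
        rw [SimpleGraph.Walk.support_eq_cons, List.mem_cons] at hend
        rcases hend with h | h
        · exact absurd h.symm hcv'
        · exact h
      exact hdisj hvsup hv2
    rw [hE']
    exact Or.inl ⟨heT, by simp [hne1, hne2]⟩
  have hreach_bc : T'.Reachable b c := by
    rw [hb]
    exact ⟨(p.tail.takeUntil c hcmem_tail).transfer T' hw0sub⟩
  -- connectivity
  have hkey : ∀ {x y : V}, T.Adj x y → T'.Reachable x y := by
    intro x y hxy
    by_cases hx1 : s(x, y) = e1
    · rw [he1def] at hx1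
      rcases Sym2.eq_iff.mp hx1 with ⟨rfl, rfl⟩ | ⟨rfl, rfl⟩
      · exact hT'uc.reachable.trans hreach_bc.symm
      · exact (hT'uc.reachable.trans hreach_bc.symm).symm
    by_cases hx2 : s(x, y) = e2
    · rw [he2def] at hx2
      rcases Sym2.eq_iff.mp hx2 with ⟨rfl, rfl⟩ | ⟨rfl, rfl⟩
      · exact hreach_bc.symm.trans hT'bv.reachable
      · exact (hreach_bc.symm.trans hT'bv.reachable).symm
    · exact ((hadj' x y).mpr (Or.inl ⟨hxy, hx1, hx2⟩)).reachable
  have hconn : T'.Connected := by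
    haveI := hT.isConnected.nonempty
    refine ⟨fun x y => ?_⟩
    obtain ⟨w⟩ := hT.isConnected.preconnected x y
    induction w with
    | nil => exact Reachable.refl _
    | cons h q ih => exact (hkey h).trans ih
  -- acyclicity
  have hcmem_p : c ∈ p.support := by
    rw [SimpleGraph.Walk.mem_support_iff_exists_getVert]
    exact ⟨p.length - 1, hc.symm, by omega⟩
  have hq1path : (p.takeUntil c hcmem_p).IsPath := hp.takeUntil hcmem_p
  have hq1nnil : ¬(p.takeUntil c hcmem_p).Nil := by
    intro hnil
    have h0 := (p.takeUntil c hcmem_p).getVert_zero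
    have hL := (p.takeUntil c hcmem_p).getVert_length
    rw [SimpleGraph.Walk.nil_iff_length_eq.mp hnil, h0] at hL
    exact huc hL
  have he1q1 : e1 ∈ (p.takeUntil c hcmem_p).edges := by
    have hmem : s(u, (p.takeUntil c hcmem_p).getVert 1) ∈ (p.takeUntil c hcmem_p).edges := by
      have hce := congrArg SimpleGraph.Walk.edges ((p.takeUntil c hcmem_p).cons_tail_eq hq1nnil)
      rw [SimpleGraph.Walk.edges_cons] at hce
      rw [← hce]
      exact List.mem_cons_self
    have hgv : (p.takeUntil c hcmem_p).getVert 1 = b := by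
      have hga := SimpleGraph.Walk.getVert_append (p.takeUntil c hcmem_p)
        (p.dropUntil c hcmem_p) 1
      rw [p.take_spec hcmem_p] at hga
      by_cases hq1l : 1 < (p.takeUntil c hcmem_p).length
      · rw [if_pos hq1l] at hga
        rw [← hga, ← hb]
      · have hpos : 0 < (p.takeUntil c hcmem_p).length := by
          rw [← SimpleGraph.Walk.not_nil_iff_lt_length]; exact hq1nnil
        have hl1 : (p.takeUntil c hcmem_p).length = 1 := by omega
        rw [if_neg hq1l, hl1] at hga
        simp only [Nat.sub_self, SimpleGraph.Walk.getVert_zero] at hga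
        exact absurd (hb.trans hga) hbc
    rw [hgv] at hmem
    rw [he1def]
    exact hmem
  have hnr_uc : ¬(T.deleteEdges {e1}).Reachable u c :=
    not_reachable_delete_edge hT.IsAcyclic hq1path he1q1
  have hG1acyc : ((T.deleteEdges {e1}) ⊔ SimpleGraph.fromEdgeSet {f1}).IsAcyclic := by
    rw [hf1def]
    exact acyclic_add_edge (acyclic_mono' (deleteEdges_le _) hT.IsAcyclic) hnr_uc
  have hsub2 : ∀ e ∈ p.tail.edges, e ∈ ((T.deleteEdges {e1}) ⊔ SimpleGraph.fromEdgeSet {f1}).edgeSet := by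
    intro e he
    have heT : e ∈ T.edgeSet := p.tail.edges_subset_edgeSet he
    have hne1 : e ≠ e1 := fun h => he1tail (h ▸ he)
    rw [edgeSet_sup, edgeSet_deleteEdges]
    exact Or.inl ⟨heT, by simpa using hne1⟩
  have hq2path : (p.tail.transfer _ hsub2).IsPath := htpath.transfer hsub2
  have he2q2 : e2 ∈ (p.tail.transfer _ hsub2).edges := by
    rw [SimpleGraph.Walk.edges_transfer]
    exact he2tail
  have hnr_bv : ¬(((T.deleteEdges {e1}) ⊔ SimpleGraph.fromEdgeSet {f1}).deleteEdges {e2}).Reachable b v := by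
    rw [hb]
    exact not_reachable_delete_edge hG1acyc hq2path he2q2
  have hT'acyc : T'.IsAcyclic := by
    have hac := acyclic_add_edge
      (acyclic_mono' (deleteEdges_le _) hG1acyc) hnr_bv
    have hgeq : T' = (((T.deleteEdges {e1}) ⊔ SimpleGraph.fromEdgeSet {f1}).deleteEdges {e2}) ⊔
        SimpleGraph.fromEdgeSet {s(b, v)} := by
      rw [hT', ← hf2def]
      ext x y
      simp only [sup_adj, deleteEdges_adj, fromEdgeSet_adj, Set.mem_insert_iff,
        Set.mem_singleton_iff]
      constructor
      · rintro (⟨h, hne⟩ | ⟨h | h, hxy⟩)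
        · exact Or.inl ⟨Or.inl ⟨h, fun h1 => hne (Or.inl h1)⟩, fun h2 => hne (Or.inr h2)⟩
        · exact Or.inl ⟨Or.inr ⟨h, hxy⟩, fun h2 => hf1e2 (h.symm.trans h2)⟩
        · exact Or.inr ⟨h, hxy⟩
      · rintro (⟨⟨h, h1⟩ | ⟨h, hxy⟩, h2⟩ | ⟨h, hxy⟩)
        · exact Or.inl ⟨h, fun hx => hx.elim h1 h2⟩
        · exact Or.inr ⟨Or.inl h, hxy⟩
        · exact Or.inr ⟨Or.inr h, hxy⟩
    rw [hgeq]
    exact hac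
  -- Sombor index
  set F : Sym2 V → ℝ := Sym2.lift ⟨fun x y => Real.sqrt ((deg T x : ℝ) ^ 2 + (deg T y : ℝ) ^ 2),
    fun x y => by simp [add_comm]⟩ with hF
  have hsombor : ∀ (G' : SimpleGraph V), (∀ w, deg G' w = deg T w) →
      somborIndex G' = ∑ᶠ e ∈ G'.edgeSet, F e := by
    intro G' hdg
    unfold somborIndex
    refine finsum_mem_congr rfl fun e _ => ?_
    induction e using Sym2.ind with
    | _ x y => rw [hF]; simp only [Sym2.lift_mk, hdg]
  have hfin1 : (T.edgeSet \ {e1, e2} : Set (Sym2 V)).Finite := Set.toFinite _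
  have hfinp : ∀ s : Set (Sym2 V), s.Finite := fun s => Set.toFinite s
  have hdisj : Disjoint (T.edgeSet \ {e1, e2}) ({f1, f2} : Set (Sym2 V)) := by
    rw [Set.disjoint_right]
    intro e he hmem
    rcases he with rfl | he
    · exact hf1E hmem.1
    · have : e = f2 := he
      subst this
      exact hf2E hmem.1
  have hsumT' : somborIndex T' = (∑ᶠ e ∈ T.edgeSet \ {e1, e2}, F e) + (F f1 + F f2) := by
    rw [hsombor T' hdeg, hE', finsum_mem_union hdisj (hfinp _) (hfinp _), finsum_mem_pair hf12]
  have hsub12 : ({e1, e2} : Set (Sym2 V)) ⊆ T.edgeSet := by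
    intro e he
    rcases he with rfl | he
    · exact he1E
    · have : e = e2 := he
      subst this
      exact he2E
  have hsumT : somborIndex T = (∑ᶠ e ∈ T.edgeSet \ {e1, e2}, F e) + (F e1 + F e2) := by
    rw [hsombor T (fun _ => rfl), ← Set.diff_union_of_subset hsub12,
      finsum_mem_union Set.disjoint_sdiff_left (hfinp _) (hfinp _), finsum_mem_pair he12]
    rw [Set.diff_union_of_subset hsub12]
  refine ⟨⟨hconn, hT'acyc⟩, hdeg, ?_⟩
  rw [hsumT', hsumT]
  have hkey2 : F f1 + F f2 < F e1 + F e2 := by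
    rw [he1def, he2def, hf1def, hf2def, hF]
    simp only [Sym2.lift_mk]
    exact sqrt_swap_ineq (Nat.cast_nonneg _) (Nat.cast_nonneg _)
      (by exact_mod_cast h1) (by exact_mod_cast h2)
  linarith
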